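/- Let F be a linearly ordered field with integer part I, let α, β ∈ F be distinct irrationals with α, β > 1, and let a, b ∈ I^{≥0} be such that a·α^{−1} + b·(1 − β^{−1}) = 1. Then N_α ⊆ N_β. -/

import Mathlib

/-- `N_α`: the set `{⌊n·α⌋ : n ∈ I, n ≥ 0}`, where `fl` is the floor function
associated to the integer part `I` of `F`. -/
def Nset {F : Type*} [Field F] [LinearOrder F] [IsStrictOrderedRing F] (I : Subring F) (fl : F → F) (α : F) : Set F :=
  {y | ∃ n, n ∈ I ∧ 0 ≤ n ∧ y = fl (n * α)}

/-- An element of `F` is rational (with respect to `I`) if it lies in the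
fraction field of `I` viewed inside `F`. -/
def IsRat {F : Type*} [Field F] [LinearOrder F] [IsStrictOrderedRing F] (I : Subring F) (α : F) : Prop :=
  ∃ p ∈ I, ∃ q ∈ I, q ≠ 0 ∧ α = p / q

theorem stmt_10 {F : Type*} [Field F] [LinearOrder F] [IsStrictOrderedRing F] (I : Subring F) (fl : F → F)
    (hdisc : ∀ x ∈ I, ¬(0 < x ∧ x < 1))
    (hfl : ∀ x : F, fl x ∈ I ∧ fl x ≤ x ∧ x < fl x + 1)
    (α β : F) (hα1 : 1 < α) (hβ1 : 1 < β)
    (hαirr : ¬ IsRat I α) (hβirr : ¬ IsRat I β) (hne : α ≠ β)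
    (a b : F) (ha : a ∈ I) (hb : b ∈ I) (ha0 : 0 ≤ a) (hb0 : 0 ≤ b)
    (hab : a * α⁻¹ + b * (1 - β⁻¹) = 1) :
    Nset I fl α ⊆ Nset I fl β := by
  have hα0 : (0:F) < α := lt_trans one_pos hα1
  have hβ0 : (0:F) < β := lt_trans one_pos hβ1
  have hαne : α ≠ 0 := ne_of_gt hα0
  have hβne : β ≠ 0 := ne_of_gt hβ0
  have hβinv0 : (0:F) < β⁻¹ := inv_pos.mpr hβ0
  have hβinv1 : β⁻¹ < 1 := inv_lt_one_of_one_lt₀ hβ1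
  obtain ⟨γ, hγdef⟩ : ∃ γ : F, γ = 1 - β⁻¹ := ⟨_, rfl⟩
  rw [← hγdef] at hab
  have hγ0 : (0:F) < γ := by rw [hγdef]; linarith
  have hγ1 : γ < 1 := by rw [hγdef]; linarith
  -- uniqueness of floor
  have hflu : ∀ (c x : F), c ∈ I → c ≤ x → x < c + 1 → fl x = c := by
    intro c x hcI hc1 hc2
    obtain ⟨hI, hle, hlt⟩ := hfl x
    by_contra hne'
    rcases lt_or_gt_of_ne (sub_ne_zero.mpr hne') with h | h
    · exact hdisc (c - fl x) (I.sub_mem hcI hI) ⟨by linarith, by linarith⟩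
    · exact hdisc (fl x - c) (I.sub_mem hI hcI) ⟨h, by linarith⟩
  -- b positive
  have hbpos : (0:F) < b := by
    rcases lt_or_eq_of_le hb0 with h | h
    · exact h
    · exfalso
      apply hαirr
      have hb0' : b = 0 := h.symm
      have haa : a * α⁻¹ = 1 := by rw [hb0'] at hab; linarith
      refine ⟨a, ha, 1, I.one_mem, one_ne_zero, ?_⟩
      rw [div_one]
      have := congrArg (· * α) haa
      rw [mul_assoc, inv_mul_cancel₀ hαne, mul_one, one_mul] at this
      linarith
  -- b * γ < 1
  have hbγ : b * γ < 1 := by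
    by_contra h
    push_neg at h
    have haα : a * α⁻¹ ≤ 0 := by linarith
    have haα' : 0 ≤ a * α⁻¹ := mul_nonneg ha0 (le_of_lt (inv_pos.mpr hα0))
    have haz : a * α⁻¹ = 0 := le_antisymm haα haα'
    have ha0' : a = 0 := by
      rcases mul_eq_zero.mp haz with h' | h'
      · exact h'
      · exact absurd h' (inv_ne_zero hαne)
    have hbγ1 : b * γ = 1 := by rw [ha0'] at hab; linarith
    have hb1 : 1 < b := by nlinarith
    apply hβirr
    refine ⟨b, hb, b - 1, I.sub_mem hb I.one_mem, by linarith, ?_⟩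
    rw [hγdef] at hbγ1
    have hbb : b * β⁻¹ = b - 1 := by linear_combination -hbγ1
    rw [eq_div_iff (by linarith : b - (1:F) ≠ 0)]
    have := congrArg (· * β) hbb
    rw [mul_assoc, inv_mul_cancel₀ hβne, mul_one] at this
    linarith
  -- key: a = α * (1 - b*γ)
  have haα : a = α * (1 - b * γ) := by
    have h1 : a * α⁻¹ = 1 - b * γ := by linarith
    have := congrArg (· * α) h1
    rw [mul_assoc, inv_mul_cancel₀ hαne, mul_one] at this
    rw [this]; ring
  intro y hy
  obtain ⟨n, hnI, hn0, hy⟩ := hy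
  by_cases hn : n = 0
  · exact ⟨0, I.zero_mem, le_refl 0, by rw [hy, hn, zero_mul, zero_mul]⟩
  have hnpos : 0 < n := lt_of_le_of_ne hn0 (Ne.symm hn)
  obtain ⟨hmI, hmle, hmlt⟩ := hfl (n * α)
  obtain ⟨m, hmdef⟩ : ∃ m : F, m = fl (n * α) := ⟨_, rfl⟩
  rw [← hmdef] at hmI hmle hmlt hy
  -- n*α is not equal to m (irrationality of α)
  have hnαm : m < n * α := by
    rcases lt_or_eq_of_le hmle with h | h
    · exact h
    · exfalso
      apply hαirr
      exact ⟨m, hmI, n, hnI, hn, by rw [eq_div_iff hn]; linarith⟩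
  have hm0 : (0:F) ≤ m := by
    by_contra h
    push_neg at h
    have hnα0 : 0 < n * α := mul_pos hnpos hα0
    exact hdisc (-m) (I.neg_mem hmI) ⟨by linarith, by linarith⟩
  obtain ⟨hj0I, hj0le, hj0lt⟩ := hfl (m * γ)
  obtain ⟨j0, hj0def⟩ : ∃ j : F, j = fl (m * γ) := ⟨_, rfl⟩
  rw [← hj0def] at hj0I hj0le hj0lt
  -- key inequality: (m+1)*γ < j0 + 1
  have hkey : (m + 1) * γ < j0 + 1 := by
    by_contra h
    push_neg at h
    -- (m+1)*γ ≠ j0+1 since β is irrational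
    have hne2 : j0 + 1 ≠ (m + 1) * γ := by
      intro heq
      apply hβirr
      rw [hγdef] at heq
      have h2 : (m+1) * β⁻¹ = m - j0 := by linear_combination heq
      have hq : m - j0 ≠ 0 := by
        intro hz
        have h3 : (m+1) * β⁻¹ = 0 := by rw [h2, hz]
        have h4 : m + 1 = 0 := by
          rcases mul_eq_zero.mp h3 with h' | h'
          · exact h'
          · exact absurd h' (inv_ne_zero hβne)
        linarith
      refine ⟨m + 1, I.add_mem hmI I.one_mem, m - j0, I.sub_mem hmI hj0I, hq, ?_⟩
      rw [eq_div_iff hq]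
      have := congrArg (· * β) h2
      rw [mul_assoc, inv_mul_cancel₀ hβne, mul_one] at this
      linarith
    have hj : j0 + 1 < (m + 1) * γ := lt_of_le_of_ne h hne2
    obtain ⟨s, hsdef⟩ : ∃ s : F, s = n * a + b * (j0 + 1) := ⟨_, rfl⟩
    have hsI : s ∈ I := by
      rw [hsdef]
      exact I.add_mem (I.mul_mem hnI ha) (I.mul_mem hb (I.add_mem hj0I I.one_mem))
    have he1 : s - m = (n*α - m) * (1 - b*γ) + b * ((j0+1) - m*γ) := by
      rw [hsdef, haα]; ring
    have he2 : s - m - 1 = (n*α - m - 1) * (1 - b*γ) + b * ((j0+1) - (m+1)*γ) := by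
      rw [hsdef, haα]; ring
    have hlow : (0:F) < s - m := by
      have h1 : 0 < (n*α - m) * (1 - b*γ) := mul_pos (by linarith) (by linarith)
      have h2 : 0 < b * ((j0+1) - m*γ) := mul_pos hbpos (by linarith)
      linarith
    have hhigh : s - m < 1 := by
      have h1 : (n*α - m - 1) * (1 - b*γ) < 0 := mul_neg_of_neg_of_pos (by linarith) (by linarith)
      have h2 : b * ((j0+1) - (m+1)*γ) < 0 := mul_neg_of_pos_of_neg hbpos (by linarith)
      linarith
    exact hdisc (s - m) (I.sub_mem hsI hmI) ⟨hlow, hhigh⟩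
  -- take k = m - j0
  obtain ⟨k, hkdef⟩ : ∃ k : F, k = m - j0 := ⟨_, rfl⟩
  have hkI : k ∈ I := by rw [hkdef]; exact I.sub_mem hmI hj0I
  have hββ : β⁻¹ * β = 1 := inv_mul_cancel₀ hβne
  have hk1 : m ≤ k * β := by
    have hγe : m * γ = m - m * β⁻¹ := by rw [hγdef]; ring
    have h1 : m * β⁻¹ ≤ k := by rw [hkdef]; linarith
    have := mul_le_mul_of_nonneg_right h1 (le_of_lt hβ0)
    rw [mul_assoc, hββ, mul_one] at this
    linarith
  have hk2 : k * β < m + 1 := by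
    have hγe : (m+1) * γ = (m+1) - (m+1) * β⁻¹ := by rw [hγdef]; ring
    have h1 : k < (m + 1) * β⁻¹ := by rw [hkdef]; linarith
    have := mul_lt_mul_of_pos_right h1 hβ0
    rw [mul_assoc, hββ, mul_one] at this
    linarith
  have hk0 : (0:F) ≤ k := by
    by_contra h
    push_neg at h
    have h1 : 0 < (-k) * β := mul_pos (neg_pos.mpr h) hβ0
    have h2 : (-k) * β = -(k * β) := by ring
    rw [h2] at h1
    linarith
  exact ⟨k, hkI, hk0, by rw [hy]; exact (hflu m (k * β) hmI hk1 hk2).symm⟩
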